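/- For every permutation π of [n], the constant L̂_π = (1/(mn))‖Λ_π^{1/2}(∑_{j=1}^m I_{b(j−1)↑}A_πA_π^⊤I_{b(j−1)↑})Λ_π^{1/2}‖₂ satisfies the chain of inequalities L̂_π ≤ (1/(mn))∑_{j=1}^m ‖I_{b(j−1)↑}Λ_π^{1/2}A_π(Λ_π^{1/2}A_π)^⊤I_{b(j−1)↑}‖₂ ≤ (1/n)‖Λ^{1/2}A(Λ^{1/2}A)^⊤‖₂ ≤ (1/n)∑_{i=1}^n L_i‖a_i‖₂² ≤ max_{1≤i≤n} L_i‖a_i‖₂² = L. In particular L̂ = max_π L̂_π ≤ L. -/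

import Mathlib

open Finset Matrix

namespace SSGD

/-- squared Euclidean norm of a finite vector -/
noncomputable def sq {ι : Type*} [Fintype ι] (x : ι → ℝ) : ℝ := ∑ i, (x i) ^ 2

/-- Euclidean dot product -/
noncomputable def dot {ι : Type*} [Fintype ι] (x y : ι → ℝ) : ℝ := ∑ i, x i * y i

/-- weighted squared norm `‖u‖²_{(diag w)⁻¹} = ∑ i, (u i)² / w i` -/
noncomputable def wsq {ι : Type*} [Fintype ι] (w u : ι → ℝ) : ℝ := ∑ i, (u i) ^ 2 / w i

/-- operator (spectral) norm of a real matrix -/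
noncomputable def opNorm {α β : Type*} [Fintype α] [Fintype β] [DecidableEq β]
    (M : Matrix α β ℝ) : ℝ :=
  ‖LinearMap.toContinuousLinearMap (Matrix.toEuclideanLin M)‖

/-- `0`-based global index of the `j`-th element of the `i`-th batch of size `b` -/
def idx (b m : ℕ) (i : Fin m) (j : Fin b) : Fin (b * m) :=
  ⟨b * i.1 + j.1, by
    have hi : i.1 + 1 ≤ m := i.2
    have hj : j.1 < b := j.2
    calc b * i.1 + j.1 < b * i.1 + b := by omega
      _ = b * (i.1 + 1) := by ring
      _ ≤ b * m := Nat.mul_le_mul (le_refl b) hi⟩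

/-- `I_{j↑}` : the identity matrix with its first `j` diagonal entries zeroed out -/
noncomputable def Iup (n j : ℕ) : Matrix (Fin n) (Fin n) ℝ :=
  Matrix.diagonal fun i => if j ≤ i.1 then 1 else 0

/-- `I_{(j)}` (`j` 0-based) : diagonal matrix with ones exactly in positions
`b*j, …, b*(j+1)-1` -/
noncomputable def Iblk (n b j : ℕ) : Matrix (Fin n) (Fin n) ℝ :=
  Matrix.diagonal fun i => if b * j ≤ i.1 ∧ i.1 < b * (j + 1) then 1 else 0

variable {d b m : ℕ}

/-- the row-permuted data matrix `A_π` (row `i` of `A_π` is row `π i` of `A`) -/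
def permMat (A : Matrix (Fin (b * m)) (Fin d) ℝ) (π : Equiv.Perm (Fin (b * m))) :
    Matrix (Fin (b * m)) (Fin d) ℝ :=
  A.submatrix π id

/-- `Ĉ_π = (1/(m·n)) ‖W_π^{1/2} (∑_{j=1}^m I_{b(j-1)↑} A_π A_πᵀ I_{b(j-1)↑}) W_π^{1/2}‖₂`;
this is `L̂_π` for `w = L` and `Ĝ_π` for `w = G²`. -/
noncomputable def hatC (A : Matrix (Fin (b * m)) (Fin d) ℝ) (w : Fin (b * m) → ℝ)
    (π : Equiv.Perm (Fin (b * m))) : ℝ :=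
  (1 / ((m : ℝ) * ((b * m : ℕ) : ℝ))) * opNorm
    (Matrix.diagonal (fun i => Real.sqrt (w (π i))) *
      (∑ j : Fin m,
        Iup (b * m) (b * j.1) * (permMat A π * (permMat A π)ᵀ) * Iup (b * m) (b * j.1)) *
      Matrix.diagonal (fun i => Real.sqrt (w (π i))))

/-- `C̃_π = (1/b) ‖W_π^{1/2} (∑_{j=1}^m I_{(j)} A_π A_πᵀ I_{(j)}) W_π^{1/2}‖₂`;
this is `L̃_π` for `w = L` and `G̃_π` for `w = G²`. -/
noncomputable def tilC (A : Matrix (Fin (b * m)) (Fin d) ℝ) (w : Fin (b * m) → ℝ)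
    (π : Equiv.Perm (Fin (b * m))) : ℝ :=
  (1 / (b : ℝ)) * opNorm
    (Matrix.diagonal (fun i => Real.sqrt (w (π i))) *
      (∑ j : Fin m,
        Iblk (b * m) b j.1 * (permMat A π * (permMat A π)ᵀ) * Iblk (b * m) b j.1) *
      Matrix.diagonal (fun i => Real.sqrt (w (π i))))

/-- one inner (mini-batch) step of shuffled SGD, using the (sub)gradient selection `g` -/
noncomputable def step (A : Matrix (Fin (b * m)) (Fin d) ℝ) (g : Fin (b * m) → ℝ → ℝ)
    (η : ℝ) (π : Equiv.Perm (Fin (b * m))) (i : Fin m) (x : Fin d → ℝ) : Fin d → ℝ :=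
  fun t => x t - (η / (b : ℝ)) *
    ∑ j : Fin b, g (π (idx b m i j)) (dot (A (π (idx b m i j))) x) * A (π (idx b m i j)) t

/-- the primal iterates `x_{k-1,1}, …, x_{k-1,m+1}` within a single epoch
(`inIter A g η π x0 i` is `x_{k-1,i+1}`, so `inIter … 0 = x_{k-1}` and
`inIter … m = x_k`) -/
noncomputable def inIter (A : Matrix (Fin (b * m)) (Fin d) ℝ) (g : Fin (b * m) → ℝ → ℝ)
    (η : ℝ) (π : Equiv.Perm (Fin (b * m))) (x0 : Fin d → ℝ) : ℕ → Fin d → ℝ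
  | 0 => x0
  | i + 1 =>
    if h : i < m then step A g η π ⟨i, h⟩ (inIter A g η π x0 i) else inIter A g η π x0 i

/-- the dual vector `y_k` of one epoch, in permuted coordinates: its `p`-th entry is
`g_{π(p)}(a_{π(p)}ᵀ x_{k-1,i})` where `i` is the batch containing position `p` -/
noncomputable def dualY (A : Matrix (Fin (b * m)) (Fin d) ℝ) (g : Fin (b * m) → ℝ → ℝ)
    (η : ℝ) (π : Equiv.Perm (Fin (b * m))) (x0 : Fin d → ℝ) : Fin (b * m) → ℝ :=
  fun p => g (π p) (dot (A (π p)) (inIter A g η π x0 (p.1 / b)))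

/-- multi-epoch shuffled SGD: `xSeq A g η πs x0 k` is the iterate after `k` full epochs;
the (0-based) epoch `k` uses the permutation `πs k` and the step size `η k`. -/
noncomputable def xSeq (A : Matrix (Fin (b * m)) (Fin d) ℝ) (g : Fin (b * m) → ℝ → ℝ)
    (η : ℕ → ℝ) (πs : ℕ → Equiv.Perm (Fin (b * m))) (x0 : Fin d → ℝ) : ℕ → Fin d → ℝ
  | 0 => x0
  | k + 1 => inIter A g (η k) (πs k) (xSeq A g η πs x0 k) m

/-- the convex (Fenchel) conjugate of `f : ℝ → ℝ` -/
noncomputable def fconj (f : ℝ → ℝ) (y : ℝ) : ℝ := sSup (Set.range fun t => y * t - f t)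

/-- the Lagrangian `𝓛(x,y) = (1/n) ⟨A x, y⟩ - (1/n) ∑ᵢ ℓᵢ*(yⁱ)` -/
noncomputable def Lagr (A : Matrix (Fin (b * m)) (Fin d) ℝ) (ℓ : Fin (b * m) → ℝ → ℝ)
    (x : Fin d → ℝ) (y : Fin (b * m) → ℝ) : ℝ :=
  (1 / ((b * m : ℕ) : ℝ)) * ∑ i, dot (A i) x * y i
    - (1 / ((b * m : ℕ) : ℝ)) * ∑ i, fconj (ℓ i) (y i)

/-- `g` is a (global) subgradient of `f` at `t` -/
def IsSubgrad (f : ℝ → ℝ) (t g : ℝ) : Prop := ∀ s, f t + g * (s - t) ≤ f s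

/-- expectation with respect to the uniform distribution on a finite type -/
noncomputable def Eunif {α : Type*} [Fintype α] (F : α → ℝ) : ℝ :=
  (∑ a : α, F a) / (Fintype.card α : ℝ)

/-- extend a `K`-tuple of permutations to an `ℕ`-indexed sequence (by the identity) -/
def extSeq {K n : ℕ} (g : Fin K → Equiv.Perm (Fin n)) : ℕ → Equiv.Perm (Fin n) :=
  fun k => if h : k < K then g ⟨k, h⟩ else 1


section Aux

lemma aux_enorm_sq {ι : Type*} [Fintype ι] (x : EuclideanSpace ℝ ι) :
    ‖x‖ ^ 2 = ∑ i, (x i) ^ 2 := by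
  rw [EuclideanSpace.norm_eq, Real.sq_sqrt (by positivity)]
  simp [sq_abs]

lemma aux_opNorm_nonneg {α β : Type*} [Fintype α] [Fintype β] [DecidableEq β]
    (M : Matrix α β ℝ) : 0 ≤ opNorm M := norm_nonneg _

lemma aux_sq_mulVec_le {α β : Type*} [Fintype α] [Fintype β] [DecidableEq β]
    (M : Matrix α β ℝ) (x : β → ℝ) :
    sq (M.mulVec x) ≤ (opNorm M)^2 * sq x := by
  have h := (LinearMap.toContinuousLinearMap (Matrix.toEuclideanLin M)).le_opNorm
    ((WithLp.equiv 2 (β → ℝ)).symm x)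
  have h2 : ‖(LinearMap.toContinuousLinearMap (Matrix.toEuclideanLin M))
      ((WithLp.equiv 2 (β → ℝ)).symm x)‖ ^ 2 = sq (M.mulVec x) := by
    rw [LinearMap.coe_toContinuousLinearMap', Matrix.toEuclideanLin_apply,
      aux_enorm_sq]
    simp [sq]
  have h3 : ‖(WithLp.equiv 2 (β → ℝ)).symm x‖ ^ 2 = sq x := by
    rw [aux_enorm_sq]; simp [sq]
  calc sq (M.mulVec x) = _ ^ 2 := h2.symm
    _ ≤ (opNorm M * ‖(WithLp.equiv 2 (β → ℝ)).symm x‖)^2 := by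
        apply pow_le_pow_left₀ (norm_nonneg _) h
    _ = (opNorm M)^2 * sq x := by rw [mul_pow, h3]

lemma aux_opNorm_le {α β : Type*} [Fintype α] [Fintype β] [DecidableEq β]
    (M : Matrix α β ℝ) {C : ℝ} (hC : 0 ≤ C)
    (h : ∀ x : β → ℝ, sq (M.mulVec x) ≤ C^2 * sq x) : opNorm M ≤ C := by
  refine ContinuousLinearMap.opNorm_le_bound _ hC fun x => ?_
  have h2 : ‖(LinearMap.toContinuousLinearMap (Matrix.toEuclideanLin M)) x‖ ^ 2
      = sq (M.mulVec ((WithLp.equiv 2 (β → ℝ)) x)) := by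
    rw [LinearMap.coe_toContinuousLinearMap', Matrix.toEuclideanLin_apply, aux_enorm_sq]
    simp [sq]
  have h3 : ‖x‖^2 = sq ((WithLp.equiv 2 (β → ℝ)) x) := by rw [aux_enorm_sq]; simp [sq]
  have := h ((WithLp.equiv 2 (β → ℝ)) x)
  nlinarith [norm_nonneg ((LinearMap.toContinuousLinearMap (Matrix.toEuclideanLin M)) x),
    norm_nonneg x, mul_nonneg hC (norm_nonneg x)]

lemma aux_opNorm_mul_le {α β γ : Type*} [Fintype α] [Fintype β] [Fintype γ]
    [DecidableEq β] [DecidableEq γ]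
    (M : Matrix α β ℝ) (N : Matrix β γ ℝ) :
    opNorm (M * N) ≤ opNorm M * opNorm N := by
  refine aux_opNorm_le _ (mul_nonneg (aux_opNorm_nonneg M) (aux_opNorm_nonneg N)) fun x => ?_
  rw [← Matrix.mulVec_mulVec]
  calc sq (M.mulVec (N.mulVec x)) ≤ (opNorm M)^2 * sq (N.mulVec x) := aux_sq_mulVec_le M _
    _ ≤ (opNorm M)^2 * ((opNorm N)^2 * sq x) := by
        apply mul_le_mul_of_nonneg_left (aux_sq_mulVec_le N x) (by positivity)
    _ = (opNorm M * opNorm N)^2 * sq x := by ring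

lemma aux_opNorm_sum_le {α β : Type*} [Fintype α] [Fintype β] [DecidableEq β]
    {ι : Type*} (s : Finset ι) (f : ι → Matrix α β ℝ) :
    opNorm (∑ j ∈ s, f j) ≤ ∑ j ∈ s, opNorm (f j) := by
  unfold opNorm
  rw [map_sum, map_sum]
  exact norm_sum_le _ _

lemma aux_opNorm_diag_le_one {α : Type*} [Fintype α] [DecidableEq α]
    (w : α → ℝ) (hw : ∀ i, w i = 0 ∨ w i = 1) :
    opNorm (Matrix.diagonal w) ≤ 1 := by
  refine aux_opNorm_le _ zero_le_one fun x => ?_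
  rw [one_pow, one_mul]
  unfold sq
  refine Finset.sum_le_sum fun i _ => ?_
  rw [Matrix.mulVec_diagonal]
  rcases hw i with h | h <;> simp [h, _root_.sq_nonneg]

lemma aux_opNorm_submatrix_le {α : Type*} [Fintype α] [DecidableEq α]
    (M : Matrix α α ℝ) (π : Equiv.Perm α) :
    opNorm (M.submatrix π π) ≤ opNorm M := by
  refine aux_opNorm_le _ (aux_opNorm_nonneg M) fun x => ?_
  have key : (M.submatrix π π).mulVec x
      = fun i => (M.mulVec (fun k => x (π.symm k))) (π i) := by
    funext i
    simp only [Matrix.mulVec, Matrix.submatrix_apply, dotProduct]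
    rw [← Equiv.sum_comp π (fun k => M (π i) k * x (π.symm k))]
    congr 1; funext j; rw [Equiv.symm_apply_apply]
  rw [key]
  have h1 : sq (fun i => (M.mulVec (fun k => x (π.symm k))) (π i))
      = sq (M.mulVec (fun k => x (π.symm k))) := by
    unfold sq; exact Equiv.sum_comp π (fun i => (M.mulVec (fun k => x (π.symm k))) i ^ 2)
  have h2 : sq (fun k => x (π.symm k)) = sq x := by
    unfold sq; exact Equiv.sum_comp π.symm (fun k => x k ^ 2)
  rw [h1, ← h2]
  exact aux_sq_mulVec_le M _

lemma aux_opNorm_le_sqrt_frob {α β : Type*} [Fintype α] [Fintype β] [DecidableEq β]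
    (M : Matrix α β ℝ) :
    opNorm M ≤ Real.sqrt (∑ i, ∑ t, (M i t)^2) := by
  refine aux_opNorm_le _ (Real.sqrt_nonneg _) fun x => ?_
  rw [Real.sq_sqrt (by positivity)]
  unfold sq
  rw [Finset.sum_mul]
  refine Finset.sum_le_sum fun i _ => ?_
  simpa [Matrix.mulVec, dotProduct, sq] using
    Finset.sum_mul_sq_le_sq_mul_sq Finset.univ (fun t => M i t) x

lemma aux_opNorm_Iup_le {n : ℕ} (j : ℕ) : opNorm (Iup n j) ≤ 1 :=
  aux_opNorm_diag_le_one _ (fun i => by by_cases h : j ≤ i.1 <;> simp [Iup, h])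

lemma aux_key1 {n : ℕ} (w : Fin n → ℝ) (j : ℕ) (M : Matrix (Fin n) (Fin n) ℝ) :
    Matrix.diagonal w * (Iup n j * M * Iup n j) * Matrix.diagonal w
      = Iup n j * (Matrix.diagonal w * M * Matrix.diagonal w) * Iup n j := by
  set D := Matrix.diagonal w
  set I := Iup n j
  have h1 : D * I = I * D := by
    simp only [D, I, Iup, Matrix.diagonal_mul_diagonal, mul_comm]
  have h2 : I * D = D * I := h1.symm
  calc D * (I * M * I) * D = (D * I) * M * (I * D) := by noncomm_ring
    _ = (I * D) * M * (I * D) := by rw [h1]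
    _ = I * (D * M * D) * I := by nth_rewrite 2 [h2]; noncomm_ring

variable {d b m : ℕ}

lemma aux_sA_entry (A : Matrix (Fin (b * m)) (Fin d) ℝ) (L : Fin (b * m) → ℝ)
    (ρ : Equiv.Perm (Fin (b * m))) (i : Fin (b * m)) (t : Fin d) :
    (Matrix.diagonal (fun i => Real.sqrt (L (ρ i))) * permMat A ρ) i t
      = Real.sqrt (L (ρ i)) * A (ρ i) t := by
  rw [Matrix.diagonal_mul]; rfl

lemma aux_key2 (A : Matrix (Fin (b * m)) (Fin d) ℝ) (L : Fin (b * m) → ℝ)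
    (ρ : Equiv.Perm (Fin (b * m))) :
    (Matrix.diagonal (fun i => Real.sqrt (L (ρ i))) * permMat A ρ)
        * (Matrix.diagonal (fun i => Real.sqrt (L (ρ i))) * permMat A ρ)ᵀ
      = ((Matrix.diagonal (fun i => Real.sqrt (L ((1 : Equiv.Perm (Fin (b * m))) i)))
            * permMat A 1)
        * (Matrix.diagonal (fun i => Real.sqrt (L ((1 : Equiv.Perm (Fin (b * m))) i)))
            * permMat A 1)ᵀ).submatrix ρ ρ := by
  ext i k
  rw [Matrix.submatrix_apply, Matrix.mul_apply, Matrix.mul_apply]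
  refine Finset.sum_congr rfl fun t _ => ?_
  rw [Matrix.transpose_apply, Matrix.transpose_apply, aux_sA_entry, aux_sA_entry,
    aux_sA_entry, aux_sA_entry]
  simp

lemma aux_key3 (A : Matrix (Fin (b * m)) (Fin d) ℝ) (L : Fin (b * m) → ℝ)
    (hL : ∀ i, 0 ≤ L i) :
    opNorm ((Matrix.diagonal (fun i => Real.sqrt (L ((1 : Equiv.Perm (Fin (b * m))) i)))
          * permMat A 1)
        * (Matrix.diagonal (fun i => Real.sqrt (L ((1 : Equiv.Perm (Fin (b * m))) i)))
          * permMat A 1)ᵀ)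
      ≤ ∑ i, L i * sq (A i) := by
  set B := Matrix.diagonal (fun i => Real.sqrt (L ((1 : Equiv.Perm (Fin (b * m))) i)))
    * permMat A 1 with hB
  set S := ∑ i, L i * sq (A i) with hSdef
  have hS0 : 0 ≤ S := Finset.sum_nonneg fun i _ => mul_nonneg (hL i)
    (Finset.sum_nonneg fun t _ => _root_.sq_nonneg _)
  have hS : ∑ i, ∑ t, (B i t)^2 = S := by
    refine Finset.sum_congr rfl fun i _ => ?_
    rw [sq, Finset.mul_sum]
    refine Finset.sum_congr rfl fun t _ => ?_
    rw [hB, aux_sA_entry, mul_pow, Real.sq_sqrt (hL _)]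
    simp
  have hST : ∑ t, ∑ i, (Bᵀ t i)^2 = S := by
    rw [← hS, Finset.sum_comm]
    rfl
  calc opNorm (B * Bᵀ) ≤ opNorm B * opNorm Bᵀ := aux_opNorm_mul_le B Bᵀ
    _ ≤ Real.sqrt S * Real.sqrt S := by
        refine mul_le_mul ?_ ?_ (aux_opNorm_nonneg _) (Real.sqrt_nonneg _)
        · rw [← hS]; exact aux_opNorm_le_sqrt_frob B
        · rw [← hST]; exact aux_opNorm_le_sqrt_frob Bᵀ
    _ = S := Real.mul_self_sqrt hS0

lemma aux_step1 (A : Matrix (Fin (b * m)) (Fin d) ℝ) (L : Fin (b * m) → ℝ)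
    (ρ : Equiv.Perm (Fin (b * m))) :
    hatC A L ρ ≤ (1 / ((m : ℝ) * ((b * m : ℕ) : ℝ))) * ∑ j : Fin m,
      opNorm (Iup (b * m) (b * j.1) *
        ((Matrix.diagonal (fun i => Real.sqrt (L (ρ i))) * permMat A ρ) *
          (Matrix.diagonal (fun i => Real.sqrt (L (ρ i))) * permMat A ρ)ᵀ) *
        Iup (b * m) (b * j.1)) := by
  set D := Matrix.diagonal (fun i => Real.sqrt (L (ρ i))) with hD
  set P := permMat A ρ with hP
  have hDPD : D * (P * Pᵀ) * D = (D * P) * (D * P)ᵀ := by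
    rw [Matrix.transpose_mul, hD, Matrix.diagonal_transpose]
    simp only [Matrix.mul_assoc]
  have hmat : D * (∑ j : Fin m,
        Iup (b * m) (b * j.1) * (P * Pᵀ) * Iup (b * m) (b * j.1)) * D
      = ∑ j : Fin m,
        Iup (b * m) (b * j.1) * ((D * P) * (D * P)ᵀ) * Iup (b * m) (b * j.1) := by
    rw [Finset.mul_sum, Finset.sum_mul]
    refine Finset.sum_congr rfl fun j _ => ?_
    rw [aux_key1, hDPD]
  unfold hatC
  rw [hmat]
  have hc : (0:ℝ) ≤ 1 / ((m : ℝ) * ((b * m : ℕ) : ℝ)) := by positivity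
  exact mul_le_mul_of_nonneg_left (aux_opNorm_sum_le _ _) hc

lemma aux_step2 (A : Matrix (Fin (b * m)) (Fin d) ℝ) (L : Fin (b * m) → ℝ)
    (hm : 0 < m) (hbm : 0 < b * m)
    (ρ : Equiv.Perm (Fin (b * m))) :
    (1 / ((m : ℝ) * ((b * m : ℕ) : ℝ))) * ∑ j : Fin m,
      opNorm (Iup (b * m) (b * j.1) *
        ((Matrix.diagonal (fun i => Real.sqrt (L (ρ i))) * permMat A ρ) *
          (Matrix.diagonal (fun i => Real.sqrt (L (ρ i))) * permMat A ρ)ᵀ) *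
        Iup (b * m) (b * j.1))
    ≤ (1 / ((b * m : ℕ) : ℝ)) * opNorm
        ((Matrix.diagonal (fun i => Real.sqrt (L ((1 : Equiv.Perm (Fin (b * m))) i)))
            * permMat A 1)
          * (Matrix.diagonal (fun i => Real.sqrt (L ((1 : Equiv.Perm (Fin (b * m))) i)))
            * permMat A 1)ᵀ) := by
  set Mρ := (Matrix.diagonal (fun i => Real.sqrt (L (ρ i))) * permMat A ρ) *
    (Matrix.diagonal (fun i => Real.sqrt (L (ρ i))) * permMat A ρ)ᵀ with hMρ
  set N := (Matrix.diagonal (fun i => Real.sqrt (L ((1 : Equiv.Perm (Fin (b * m))) i)))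
      * permMat A 1)
    * (Matrix.diagonal (fun i => Real.sqrt (L ((1 : Equiv.Perm (Fin (b * m))) i)))
      * permMat A 1)ᵀ with hN
  have hNρ : opNorm Mρ ≤ opNorm N := by
    rw [hMρ, aux_key2 A L ρ, ← hN]
    exact aux_opNorm_submatrix_le N ρ
  have hterm : ∀ j : Fin m,
      opNorm (Iup (b * m) (b * j.1) * Mρ * Iup (b * m) (b * j.1)) ≤ opNorm N := by
    intro j
    have h1 := aux_opNorm_mul_le (Iup (b * m) (b * j.1) * Mρ) (Iup (b * m) (b * j.1))
    have h2 := aux_opNorm_mul_le (Iup (b * m) (b * j.1)) Mρ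
    have h3 := aux_opNorm_Iup_le (n := b * m) (b * j.1)
    have h4 := aux_opNorm_nonneg Mρ
    have h5 := aux_opNorm_nonneg (Iup (b * m) (b * j.1))
    have h6 := aux_opNorm_nonneg (Iup (b * m) (b * j.1) * Mρ)
    nlinarith
  have hsum : ∑ j : Fin m,
      opNorm (Iup (b * m) (b * j.1) * Mρ * Iup (b * m) (b * j.1))
      ≤ (m : ℝ) * opNorm N := by
    calc ∑ j : Fin m, opNorm (Iup (b * m) (b * j.1) * Mρ * Iup (b * m) (b * j.1))
        ≤ ∑ _j : Fin m, opNorm N := Finset.sum_le_sum fun j _ => hterm j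
      _ = (m : ℝ) * opNorm N := by
          rw [Finset.sum_const, Finset.card_univ, Fintype.card_fin, nsmul_eq_mul]
  have hm' : (0:ℝ) < m := by exact_mod_cast hm
  have hn' : (0:ℝ) < ((b * m : ℕ) : ℝ) := by exact_mod_cast hbm
  calc (1 / ((m : ℝ) * ((b * m : ℕ) : ℝ))) * ∑ j : Fin m,
        opNorm (Iup (b * m) (b * j.1) * Mρ * Iup (b * m) (b * j.1))
      ≤ (1 / ((m : ℝ) * ((b * m : ℕ) : ℝ))) * ((m : ℝ) * opNorm N) :=
        mul_le_mul_of_nonneg_left hsum (by positivity)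
    _ = (1 / ((b * m : ℕ) : ℝ)) * opNorm N := by
        rw [one_div_mul_eq_div, mul_div_mul_left _ _ hm'.ne', ← one_div_mul_eq_div]

end Aux

/-- The chain of inequalities bounding `L̂_π`:
`L̂_π ≤ (1/(mn)) ∑_j ‖I_{b(j-1)↑} Λ_π^{1/2}A_π (Λ_π^{1/2}A_π)ᵀ I_{b(j-1)↑}‖₂
     ≤ (1/n) ‖Λ^{1/2}A (Λ^{1/2}A)ᵀ‖₂ ≤ (1/n) ∑ᵢ Lᵢ‖aᵢ‖² ≤ maxᵢ Lᵢ‖aᵢ‖² = L`,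
and in particular `L̂ = max_π L̂_π ≤ L`. -/
theorem stmt10
    (b m d : ℕ) (hb : 0 < b) (hm : 0 < m)
    (A : Matrix (Fin (b * m)) (Fin d) ℝ)
    (L : Fin (b * m) → ℝ) (hL : ∀ i, 0 < L i)
    (π : Equiv.Perm (Fin (b * m))) :
    let n : ℝ := ((b * m : ℕ) : ℝ)
    let sA : Equiv.Perm (Fin (b * m)) → Matrix (Fin (b * m)) (Fin d) ℝ := fun ρ =>
      Matrix.diagonal (fun i => Real.sqrt (L (ρ i))) * permMat A ρ
    let Lfull : ℝ := ⨆ i : Fin (b * m), L i * sq (A i)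
    (hatC A L π ≤ (1 / ((m : ℝ) * n)) * ∑ j : Fin m,
        opNorm (Iup (b * m) (b * j.1) * (sA π * (sA π)ᵀ) * Iup (b * m) (b * j.1)))
    ∧ ((1 / ((m : ℝ) * n)) * ∑ j : Fin m,
          opNorm (Iup (b * m) (b * j.1) * (sA π * (sA π)ᵀ) * Iup (b * m) (b * j.1))
        ≤ (1 / n) * opNorm (sA 1 * (sA 1)ᵀ))
    ∧ ((1 / n) * opNorm (sA 1 * (sA 1)ᵀ) ≤ (1 / n) * ∑ i, L i * sq (A i))
    ∧ ((1 / n) * ∑ i, L i * sq (A i) ≤ Lfull)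
    ∧ ((⨆ ρ : Equiv.Perm (Fin (b * m)), hatC A L ρ) ≤ Lfull) := by
  intro n sA Lfull
  have hbm : 0 < b * m := Nat.mul_pos hb hm
  have hn' : (0:ℝ) < n := by
    show (0:ℝ) < ((b * m : ℕ) : ℝ)
    exact_mod_cast hbm
  have hLle : ∀ i, (0:ℝ) ≤ L i := fun i => (hL i).le
  have hbdd : BddAbove (Set.range fun i : Fin (b * m) => L i * sq (A i)) :=
    Set.Finite.bddAbove (Set.finite_range _)
  have h3 : (1 / n) * opNorm (sA 1 * (sA 1)ᵀ) ≤ (1 / n) * ∑ i, L i * sq (A i) :=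
    mul_le_mul_of_nonneg_left (aux_key3 A L hLle) (by positivity)
  have h4 : (1 / n) * ∑ i, L i * sq (A i) ≤ Lfull := by
    have hsum : ∑ i, L i * sq (A i) ≤ n * Lfull := by
      calc ∑ i, L i * sq (A i) ≤ ∑ _i : Fin (b * m), Lfull :=
            Finset.sum_le_sum fun i _ => le_ciSup hbdd i
        _ = n * Lfull := by
            rw [Finset.sum_const, Finset.card_univ, Fintype.card_fin, nsmul_eq_mul]
    calc (1 / n) * ∑ i, L i * sq (A i) ≤ (1 / n) * (n * Lfull) :=
          mul_le_mul_of_nonneg_left hsum (by positivity)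
      _ = Lfull := by field_simp
  have hchain : ∀ ρ : Equiv.Perm (Fin (b * m)), hatC A L ρ ≤ Lfull := fun ρ =>
    le_trans (aux_step1 A L ρ) (le_trans (aux_step2 A L hm hbm ρ) (le_trans h3 h4))
  exact ⟨aux_step1 A L π, aux_step2 A L hm hbm π, h3, h4, ciSup_le hchain⟩
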